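/- Let x₁,...,x_m be independent finite-valued random variables, and let Corrupt : X^m → X^m be a function such that, for each input S, each coordinate of Corrupt(S) takes one of at most d possible values determined by the corresponding coordinate of S (i.e., conditioned on Sᵢ, there are at most d possible values of Corrupt(S)ᵢ). Let S' = Corrupt(S) where S = (x₁,...,x_m). Then for any r < m, E_{i,B}[ I(S'_i ; S'_B) ] ≤ (m/(m−r)) · ln d, where i is uniform on [m] and B is a uniform size-r subset of [m]∖{i}. -/

import Mathlib

open Finset
open scoped Classical

noncomputable section

/-- `p` is a probability mass function on the finite sample space `Ω`. -/
def IsPMF {Ω : Type*} [Fintype Ω] (p : Ω → ℝ) : Prop :=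
  (∀ ω, 0 ≤ p ω) ∧ ∑ ω, p ω = 1

/-- Distribution (pmf) of the random variable `X` under the pmf `p`. -/
noncomputable def dist' {Ω α : Type*} [Fintype Ω] (p : Ω → ℝ) (X : Ω → α) : α → ℝ :=
  fun a => ∑ ω, if X ω = a then p ω else 0

/-- KL divergence between two pmfs on a finite space (natural log). -/
noncomputable def KL {α : Type*} [Fintype α] (q r : α → ℝ) : ℝ :=
  ∑ a, q a * Real.log (q a / r a)

/-- Mutual information between random variables `X` and `Y` under pmf `p`. -/
noncomputable def MI {Ω α β : Type*} [Fintype Ω] [Fintype α] [Fintype β]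
    (p : Ω → ℝ) (X : Ω → α) (Y : Ω → β) : ℝ :=
  KL (dist' p fun ω => (X ω, Y ω)) (fun ab => dist' p X ab.1 * dist' p Y ab.2)

set_option linter.unusedSectionVars false

namespace S13

variable {Ω : Type*} [Fintype Ω] {α β γ : Type*} [Fintype α] [Fintype β] [Fintype γ]
  {p : Ω → ℝ}

/-- entropy of a random variable -/
noncomputable def ent (p : Ω → ℝ) (X : Ω → α) : ℝ :=
  - ∑ a, dist' p X a * Real.log (dist' p X a)

lemma dist'_nonneg (hp : ∀ ω, 0 ≤ p ω) (X : Ω → α) (a : α) : 0 ≤ dist' p X a :=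
  Finset.sum_nonneg fun ω _ => by split_ifs; exacts [hp ω, le_rfl]

lemma sum_dist (p : Ω → ℝ) (X : Ω → α) (φ : α → ℝ) :
    ∑ a, dist' p X a * φ a = ∑ ω, p ω * φ (X ω) := by
  simp only [dist', Finset.sum_mul]
  rw [Finset.sum_comm]
  refine Finset.sum_congr rfl fun ω _ => ?_
  simp [ite_mul]

lemma dist'_sum_one (hp : IsPMF p) (X : Ω → α) : ∑ a, dist' p X a = 1 := by
  have := sum_dist p X (fun _ => 1)
  simpa [hp.2] using this

lemma ent_eq (p : Ω → ℝ) (X : Ω → α) :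
    ent p X = - ∑ ω, p ω * Real.log (dist' p X (X ω)) := by
  rw [ent, sum_dist]

lemma le_dist'_self (hp : ∀ ω, 0 ≤ p ω) (X : Ω → α) (ω : Ω) : p ω ≤ dist' p X (X ω) := by
  have h := Finset.single_le_sum (f := fun ω' => if X ω' = X ω then p ω' else 0)
    (fun ω' _ => by split_ifs; exacts [hp ω', le_rfl]) (Finset.mem_univ ω)
  simpa [dist'] using h

lemma exists_of_dist'_pos (hp : ∀ ω, 0 ≤ p ω) {X : Ω → α} {a : α} (h : 0 < dist' p X a) :
    ∃ ω, 0 < p ω ∧ X ω = a := by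
  by_contra hc
  push_neg at hc
  have hz : dist' p X a = 0 := Finset.sum_eq_zero fun ω _ => by
    split_ifs with h'
    · rcases (hp ω).lt_or_eq with h2 | h2
      · exact absurd h' (hc ω h2)
      · exact h2.symm
    · rfl
  rw [hz] at h; exact lt_irrefl _ h

lemma ent_congr {X : Ω → α} {Y : Ω → β} (h : ∀ ω₁ ω₂, X ω₁ = X ω₂ ↔ Y ω₁ = Y ω₂) :
    ent p X = ent p Y := by
  rw [ent_eq, ent_eq]
  congr 1
  refine Finset.sum_congr rfl fun ω _ => ?_
  have hd : dist' p X (X ω) = dist' p Y (Y ω) :=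
    Finset.sum_congr rfl fun ω' _ => by
      by_cases hx : X ω' = X ω
      · rw [if_pos hx, if_pos ((h ω' ω).1 hx)]
      · rw [if_neg hx, if_neg fun hy => hx ((h ω' ω).2 hy)]
  rw [hd]

lemma ent_const (hp : IsPMF p) {Y : Ω → β} (h : ∀ ω₁ ω₂, Y ω₁ = Y ω₂) : ent p Y = 0 := by
  have hΩ : Nonempty Ω := by
    by_contra hc
    rw [not_nonempty_iff] at hc
    have := hp.2
    rw [Finset.univ_eq_empty, Finset.sum_empty] at this
    norm_num at this
  obtain ⟨ω₀⟩ := hΩ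
  rw [ent]
  refine neg_eq_zero.mpr (Finset.sum_eq_zero fun a _ => ?_)
  by_cases ha : Y ω₀ = a
  · have : dist' p Y a = 1 := by
      rw [dist', ← hp.2]
      exact Finset.sum_congr rfl fun ω _ => if_pos (h ω ω₀ ▸ ha)
    simp [this]
  · have : dist' p Y a = 0 :=
      Finset.sum_eq_zero fun ω _ => if_neg fun he => ha (h ω₀ ω ▸ he)
    simp [this]

lemma gibbs {q r : α → ℝ} (hq0 : ∀ a, 0 ≤ q a) (hq1 : ∑ a, q a = 1)
    (hr0 : ∀ a, 0 ≤ r a) (hr1 : ∑ a, r a ≤ 1)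
    (hqr : ∀ a, 0 < q a → 0 < r a) :
    0 ≤ ∑ a, q a * Real.log (q a / r a) := by
  have h : ∀ a ∈ Finset.univ (α := α), q a - r a ≤ q a * Real.log (q a / r a) := by
    intro a _
    rcases (hq0 a).lt_or_eq with hq | hq
    · have hr := hqr a hq
      have h1 : Real.log (r a / q a) ≤ r a / q a - 1 :=
        Real.log_le_sub_one_of_pos (by positivity)
      have h2 : Real.log (q a / r a) = - Real.log (r a / q a) := by
        rw [← Real.log_inv]
        congr 1
        field_simp
      have h3 : 1 - r a / q a ≤ Real.log (q a / r a) := by rw [h2]; linarith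
      have h4 := mul_le_mul_of_nonneg_left h3 (le_of_lt hq)
      have h5 : q a * (1 - r a / q a) = q a - r a := by field_simp
      linarith
    · rw [← hq]
      simpa using hr0 a
  have hs := Finset.sum_le_sum h
  rw [Finset.sum_sub_distrib, hq1] at hs
  linarith


lemma marg_fst (X : Ω → α) (Y : Ω → β) (b : β) :
    ∑ a, dist' p (fun ω => (X ω, Y ω)) (a, b) = dist' p Y b := by
  simp only [dist']
  rw [Finset.sum_comm]
  refine Finset.sum_congr rfl fun ω _ => ?_
  simp [Prod.ext_iff, ite_and]

lemma marg_snd (Y : Ω → β) (Z : Ω → γ) (b : β) :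
    ∑ c, dist' p (fun ω => (Y ω, Z ω)) (b, c) = dist' p Y b := by
  simp only [dist']
  rw [Finset.sum_comm]
  refine Finset.sum_congr rfl fun ω _ => ?_
  simp [Prod.ext_iff, ite_and]

lemma joint_le_snd (hp : ∀ ω, 0 ≤ p ω) (X : Ω → α) (Y : Ω → β) (a : α) (b : β) :
    dist' p (fun ω => (X ω, Y ω)) (a, b) ≤ dist' p Y b := by
  refine Finset.sum_le_sum fun ω _ => ?_
  dsimp only
  split_ifs with h1 h2
  · exact le_rfl
  · exact absurd ((Prod.ext_iff.1 h1).2) h2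
  · exact hp ω
  · exact le_rfl

lemma MI_eq (hp : IsPMF p) (X : Ω → α) (Y : Ω → β) :
    MI p X Y = ent p X + ent p Y - ent p fun ω => (X ω, Y ω) := by
  rw [MI, KL]
  rw [sum_dist p (fun ω => (X ω, Y ω))
    (fun ab => Real.log (dist' p (fun ω => (X ω, Y ω)) ab / (dist' p X ab.1 * dist' p Y ab.2)))]
  rw [ent_eq, ent_eq, ent_eq]
  have key : ∀ ω, p ω * Real.log (dist' p (fun ω => (X ω, Y ω)) (X ω, Y ω) /
        (dist' p X (X ω) * dist' p Y (Y ω)))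
      = p ω * Real.log (dist' p (fun ω => (X ω, Y ω)) (X ω, Y ω))
        - p ω * Real.log (dist' p X (X ω)) - p ω * Real.log (dist' p Y (Y ω)) := by
    intro ω
    rcases (hp.1 ω).lt_or_eq with hω | hω
    · have h1 : 0 < dist' p (fun ω => (X ω, Y ω)) (X ω, Y ω) := lt_of_lt_of_le hω (le_dist'_self hp.1 _ ω)
      have h2 : 0 < dist' p X (X ω) := lt_of_lt_of_le hω (le_dist'_self hp.1 _ ω)
      have h3 : 0 < dist' p Y (Y ω) := lt_of_lt_of_le hω (le_dist'_self hp.1 _ ω)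
      rw [Real.log_div (ne_of_gt h1) (by positivity), Real.log_mul (ne_of_gt h2) (ne_of_gt h3)]
      ring
    · rw [← hω]; ring
  rw [Finset.sum_congr rfl fun ω _ => key ω]
  rw [Finset.sum_sub_distrib, Finset.sum_sub_distrib]
  ring

lemma ent_pair_ge_snd (hp : IsPMF p) (X : Ω → α) (Y : Ω → β) :
    ent p Y ≤ ent p fun ω => (X ω, Y ω) := by
  rw [ent_eq, ent_eq]
  have h : ∀ ω ∈ Finset.univ (α := Ω),
      p ω * Real.log (dist' p (fun ω => (X ω, Y ω)) (X ω, Y ω)) ≤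
        p ω * Real.log (dist' p Y (Y ω)) := by
    intro ω _
    rcases (hp.1 ω).lt_or_eq with hω | hω
    · refine mul_le_mul_of_nonneg_left ?_ (le_of_lt hω)
      have h1 : 0 < dist' p (fun ω => (X ω, Y ω)) (X ω, Y ω) :=
        lt_of_lt_of_le hω (le_dist'_self hp.1 _ ω)
      exact Real.log_le_log h1 (joint_le_snd hp.1 X Y _ _)
    · rw [← hω]; simp
  have := Finset.sum_le_sum h
  linarith

lemma ent_pair_ge_fst (hp : IsPMF p) (X : Ω → α) (Y : Ω → β) :
    ent p X ≤ ent p fun ω => (X ω, Y ω) := by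
  have h := ent_pair_ge_snd hp Y X
  have he : ent p (fun ω => (Y ω, X ω)) = ent p (fun ω => (X ω, Y ω)) :=
    ent_congr fun ω₁ ω₂ => by simp [Prod.ext_iff, and_comm]
  linarith


lemma ssa (hp : IsPMF p) (X : Ω → α) (Y : Ω → β) (Z : Ω → γ) :
    ent p Y + ent p (fun ω => ((X ω, Y ω), Z ω)) ≤
      ent p (fun ω => (X ω, Y ω)) + ent p (fun ω => (Y ω, Z ω)) := by
  set jXY := dist' p fun ω => (X ω, Y ω) with hjXY
  set jYZ := dist' p fun ω => (Y ω, Z ω) with hjYZ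
  set jY := dist' p Y with hjY
  set q := dist' p fun ω => ((X ω, Y ω), Z ω) with hq
  set rr : (α × β) × γ → ℝ :=
    fun s => if jY s.1.2 = 0 then 0 else jXY s.1 * jYZ (s.1.2, s.2) / jY s.1.2 with hrr
  have hq0 : ∀ s, 0 ≤ q s := dist'_nonneg hp.1 _
  have hjXY0 : ∀ s, 0 ≤ jXY s := dist'_nonneg hp.1 _
  have hjYZ0 : ∀ s, 0 ≤ jYZ s := dist'_nonneg hp.1 _
  have hjY0 : ∀ b, 0 ≤ jY b := dist'_nonneg hp.1 _
  have hr0 : ∀ s, 0 ≤ rr s := by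
    intro s
    rw [hrr]
    dsimp only
    split_ifs with h
    · exact le_rfl
    · exact div_nonneg (mul_nonneg (hjXY0 _) (hjYZ0 _)) (hjY0 _)
  have hrsum : ∑ s, rr s = 1 := by
    rw [Fintype.sum_prod_type]
    have hinner : ∀ ab : α × β, ∑ c, rr (ab, c) = jXY ab := by
      intro ab
      by_cases h : jY ab.2 = 0
      · have hle := joint_le_snd hp.1 X Y ab.1 ab.2
        have : jXY ab = 0 := le_antisymm (by rw [← hjY] at hle; rw [h] at hle; exact hle) (hjXY0 ab)
        simp [hrr, h, this]
      · have : ∑ c, jXY ab * jYZ (ab.2, c) / jY ab.2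
            = jXY ab * (∑ c, jYZ (ab.2, c)) / jY ab.2 := by
          rw [← Finset.sum_div, ← Finset.mul_sum]
        simp only [hrr, if_neg h]
        rw [this, marg_snd Y Z ab.2]
        field_simp
        rfl
    rw [Finset.sum_congr rfl fun ab _ => hinner ab]
    exact dist'_sum_one hp _
  have hqr : ∀ s, 0 < q s → 0 < rr s := by
    rintro ⟨⟨a, b⟩, c⟩ hpos
    obtain ⟨ω, hω, hval⟩ := exists_of_dist'_pos hp.1 hpos
    have hXa : X ω = a := by have := congrArg (fun s => s.1.1) hval; simpa using this
    have hYb : Y ω = b := by have := congrArg (fun s => s.1.2) hval; simpa using this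
    have hZc : Z ω = c := by have := congrArg (fun s => s.2) hval; simpa using this
    have h1 : 0 < jXY (a, b) := by
      rw [← hXa, ← hYb]; exact lt_of_lt_of_le hω (le_dist'_self hp.1 _ ω)
    have h2 : 0 < jYZ (b, c) := by
      rw [← hYb, ← hZc]; exact lt_of_lt_of_le hω (le_dist'_self hp.1 _ ω)
    have h3 : 0 < jY b := by
      rw [← hYb]; exact lt_of_lt_of_le hω (le_dist'_self hp.1 _ ω)
    simp only [hrr, if_neg (ne_of_gt h3)]
    positivity
  have key : 0 ≤ ∑ s, q s * Real.log (q s / rr s) :=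
    gibbs hq0 (dist'_sum_one hp _) hr0 (le_of_eq hrsum) hqr
  rw [hq, sum_dist p (fun ω => ((X ω, Y ω), Z ω)) (fun s => Real.log (dist' p (fun ω => ((X ω, Y ω), Z ω)) s / rr s))] at key
  have expand : ∀ ω, p ω * Real.log (dist' p (fun ω => ((X ω, Y ω), Z ω)) ((X ω, Y ω), Z ω) / rr ((X ω, Y ω), Z ω))
      = p ω * Real.log (dist' p (fun ω => ((X ω, Y ω), Z ω)) ((X ω, Y ω), Z ω))
        + p ω * Real.log (jY (Y ω))
        - p ω * Real.log (jXY (X ω, Y ω)) - p ω * Real.log (jYZ (Y ω, Z ω)) := by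
    intro ω
    rcases (hp.1 ω).lt_or_eq with hω | hω
    · have h0 : 0 < dist' p (fun ω => ((X ω, Y ω), Z ω)) ((X ω, Y ω), Z ω) :=
        lt_of_lt_of_le hω (le_dist'_self hp.1 _ ω)
      have h1 : 0 < jXY (X ω, Y ω) := lt_of_lt_of_le hω (le_dist'_self hp.1 _ ω)
      have h2 : 0 < jYZ (Y ω, Z ω) := lt_of_lt_of_le hω (le_dist'_self hp.1 _ ω)
      have h3 : 0 < jY (Y ω) := lt_of_lt_of_le hω (le_dist'_self hp.1 _ ω)
      have hrw : rr ((X ω, Y ω), Z ω) = jXY (X ω, Y ω) * jYZ (Y ω, Z ω) / jY (Y ω) := by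
        simp only [hrr, if_neg (ne_of_gt h3)]
      rw [hrw, Real.log_div (ne_of_gt h0) (by positivity),
        Real.log_div (by positivity) (ne_of_gt h3),
        Real.log_mul (ne_of_gt h1) (ne_of_gt h2)]
      ring
    · rw [← hω]; ring
  rw [Finset.sum_congr rfl fun ω _ => expand ω] at key
  rw [Finset.sum_sub_distrib, Finset.sum_sub_distrib, Finset.sum_add_distrib] at key
  rw [ent_eq p Y, ent_eq p (fun ω => ((X ω, Y ω), Z ω)), ent_eq p (fun ω => (X ω, Y ω)),
    ent_eq p (fun ω => (Y ω, Z ω))]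
  rw [hjXY, hjYZ, hjY] at key
  linarith

lemma cond_card_bound (hp : IsPMF p) {d : ℕ} (hd : 1 ≤ d) (W : Ω → α) (V : Ω → β)
    (F : β → Finset α) (hFc : ∀ b, (F b).card ≤ d) (hWF : ∀ ω, W ω ∈ F (V ω)) :
    ent p (fun ω => (W ω, V ω)) ≤ ent p V + Real.log d := by
  set q := dist' p fun ω => (W ω, V ω) with hq
  set rr : α × β → ℝ := fun s => if s.1 ∈ F s.2 then dist' p V s.2 / d else 0 with hrr
  have hd0 : (0 : ℝ) < d := by exact_mod_cast Nat.lt_of_lt_of_le Nat.zero_lt_one hd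
  have hr0 : ∀ s, 0 ≤ rr s := by
    intro s
    rw [hrr]
    dsimp only
    split_ifs
    · exact div_nonneg (dist'_nonneg hp.1 _ _) (le_of_lt hd0)
    · exact le_rfl
  have hrsum : ∑ s, rr s ≤ 1 := by
    rw [Fintype.sum_prod_type_right]
    have hinner : ∀ b : β, ∑ a, rr (a, b) ≤ dist' p V b := by
      intro b
      have : ∑ a, rr (a, b) = ∑ a ∈ F b, dist' p V b / d := by
        simp only [hrr]
        rw [Finset.sum_ite_mem, Finset.univ_inter]
      rw [this, Finset.sum_const, nsmul_eq_mul]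
      rw [div_eq_mul_inv, ← mul_assoc]
      calc ((F b).card : ℝ) * dist' p V b * (d : ℝ)⁻¹
          ≤ (d : ℝ) * dist' p V b * (d : ℝ)⁻¹ := by
            have : ((F b).card : ℝ) ≤ (d : ℝ) := by exact_mod_cast hFc b
            have h0 := dist'_nonneg hp.1 V b
            have h1 : (0:ℝ) ≤ (d:ℝ)⁻¹ := by positivity
            exact mul_le_mul_of_nonneg_right (mul_le_mul_of_nonneg_right this h0) h1
        _ = dist' p V b := by field_simp
    calc ∑ b, ∑ a, rr (a, b) ≤ ∑ b, dist' p V b := Finset.sum_le_sum fun b _ => hinner b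
      _ = 1 := dist'_sum_one hp V
  have hqr : ∀ s, 0 < q s → 0 < rr s := by
    rintro ⟨a, b⟩ hpos
    obtain ⟨ω, hω, hval⟩ := exists_of_dist'_pos hp.1 hpos
    have hWa : W ω = a := (Prod.ext_iff.1 hval).1
    have hVb : V ω = b := (Prod.ext_iff.1 hval).2
    have hmem : a ∈ F b := hWa ▸ hVb ▸ hWF ω
    have h3 : 0 < dist' p V b := by
      rw [← hVb]; exact lt_of_lt_of_le hω (le_dist'_self hp.1 _ ω)
    simp only [hrr, if_pos hmem]
    positivity
  have key : 0 ≤ ∑ s, q s * Real.log (q s / rr s) :=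
    gibbs (dist'_nonneg hp.1 _) (dist'_sum_one hp _) hr0 hrsum hqr
  rw [hq, sum_dist p (fun ω => (W ω, V ω)) (fun s => Real.log (dist' p (fun ω => (W ω, V ω)) s / rr s))] at key
  have expand : ∀ ω, p ω * Real.log (dist' p (fun ω => (W ω, V ω)) (W ω, V ω) / rr (W ω, V ω))
      = p ω * Real.log (dist' p (fun ω => (W ω, V ω)) (W ω, V ω))
        - p ω * Real.log (dist' p V (V ω)) + p ω * Real.log d := by
    intro ω
    rcases (hp.1 ω).lt_or_eq with hω | hω
    · have h0 : 0 < dist' p (fun ω => (W ω, V ω)) (W ω, V ω) :=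
        lt_of_lt_of_le hω (le_dist'_self hp.1 _ ω)
      have h3 : 0 < dist' p V (V ω) := lt_of_lt_of_le hω (le_dist'_self hp.1 _ ω)
      have hrw : rr (W ω, V ω) = dist' p V (V ω) / d := by
        simp only [hrr, if_pos (hWF ω)]
      rw [hrw, Real.log_div (ne_of_gt h0) (by positivity),
        Real.log_div (ne_of_gt h3) (ne_of_gt hd0)]
      ring
    · rw [← hω]; ring
  rw [Finset.sum_congr rfl fun ω _ => expand ω] at key
  rw [Finset.sum_add_distrib, Finset.sum_sub_distrib, ← Finset.sum_mul, hp.2] at key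
  rw [ent_eq p (fun ω => (W ω, V ω)), ent_eq p V]
  linarith

lemma ent_tuple (hp : IsPMF p) {m : ℕ} {X : Type*} [Fintype X] (x : Fin m → Ω → X)
    (hind : dist' p (fun ω => fun i => x i ω) = fun v => ∏ i, dist' p (x i) (v i)) :
    ent p (fun ω => fun i => x i ω) = ∑ i, ent p (x i) := by
  rw [ent, hind]
  have step1 : ∀ v : Fin m → X,
      (∏ i, dist' p (x i) (v i)) * Real.log (∏ i, dist' p (x i) (v i))
        = ∑ j, (∏ i, dist' p (x i) (v i)) * Real.log (dist' p (x j) (v j)) := by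
    intro v
    by_cases h : (∏ i, dist' p (x i) (v i)) = 0
    · simp [h]
    · rw [Real.log_prod (fun i _ => Finset.prod_ne_zero_iff.1 h i (Finset.mem_univ i)),
        Finset.mul_sum]
  rw [Finset.sum_congr rfl fun v _ => step1 v, Finset.sum_comm]
  have step2 : ∀ j, ∑ v : Fin m → X, (∏ i, dist' p (x i) (v i)) * Real.log (dist' p (x j) (v j))
      = ∑ a, dist' p (x j) a * Real.log (dist' p (x j) a) := by
    intro j
    have h := Fintype.prod_sum (ι := Fin m) (κ := fun _ => X)
      (fun i a => dist' p (x i) a * (if i = j then Real.log (dist' p (x j) a) else 1))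
    have hL : ∏ i, ∑ a, dist' p (x i) a * (if i = j then Real.log (dist' p (x j) a) else 1)
        = ∑ a, dist' p (x j) a * Real.log (dist' p (x j) a) := by
      rw [Finset.prod_eq_single j]
      · simp
      · intro i _ hij
        simp only [if_neg hij, mul_one]
        exact dist'_sum_one hp (x i)
      · intro h; exact absurd (Finset.mem_univ j) h
    have hR : ∀ v : Fin m → X,
        (∏ i, dist' p (x i) (v i) * (if i = j then Real.log (dist' p (x j) (v j)) else 1))
          = (∏ i, dist' p (x i) (v i)) * Real.log (dist' p (x j) (v j)) := by
      intro v
      rw [Finset.prod_mul_distrib]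
      congr 1
      rw [Finset.prod_eq_single j]
      · simp
      · intro i _ hij; exact if_neg hij
      · intro h; exact absurd (Finset.mem_univ j) h
    have hR' : ∀ v : Fin m → X,
        (∏ i, dist' p (x i) (v i) * (if i = j then Real.log (dist' p (x j) (v i)) else 1))
          = (∏ i, dist' p (x i) (v i)) * Real.log (dist' p (x j) (v j)) := by
      intro v
      have : (∏ i, dist' p (x i) (v i) * (if i = j then Real.log (dist' p (x j) (v i)) else 1))
          = ∏ i, dist' p (x i) (v i) * (if i = j then Real.log (dist' p (x j) (v j)) else 1) := by
        refine Finset.prod_congr rfl fun i _ => ?_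
        by_cases hij : i = j
        · subst hij; rfl
        · simp [hij]
      rw [this, hR v]
    rw [hL] at h
    rw [Finset.sum_congr rfl fun v _ => (hR' v).symm]
    exact h.symm
  rw [Finset.sum_congr rfl fun j _ => step2 j]
  simp [ent, Finset.sum_neg_distrib]

/-- entropy of the restriction of a family to a finite index set, together with side info T -/
noncomputable def EF {m : ℕ} {X τ : Type*} [Fintype X] [Fintype τ] (p : Ω → ℝ)
    (f : Fin m → Ω → X) (T : Ω → τ) (A : Finset (Fin m)) : ℝ :=
  ent p fun ω => ((fun j : A => f j.1 ω), T ω)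

lemma EF_submod {m : ℕ} {X τ : Type*} [Fintype X] [Fintype τ] (hp : IsPMF p)
    (f : Fin m → Ω → X) (T : Ω → τ) {B D : Finset (Fin m)} (i : Fin m) (hBD : B ⊆ D) :
    EF p f T (insert i D) + EF p f T B ≤ EF p f T D + EF p f T (insert i B) := by
  have h := ssa hp (f i) (fun ω => ((fun j : B => f j.1 ω), T ω))
    (fun ω => ((fun j : D => f j.1 ω), T ω))
  have c1 : ent p (fun ω => (f i ω, ((fun j : B => f j.1 ω), T ω)))
      = EF p f T (insert i B) := by
    apply ent_congr
    intro ω₁ ω₂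
    simp only [Prod.mk.injEq, funext_iff, EF]
    constructor
    · rintro ⟨h1, h2, h3⟩
      refine ⟨fun j => ?_, h3⟩
      rcases Finset.mem_insert.mp j.2 with hj | hj
      · rw [show (j : Fin m) = i from hj]; exact h1
      · exact h2 ⟨j.1, hj⟩
    · rintro ⟨h2, h3⟩
      exact ⟨h2 ⟨i, Finset.mem_insert_self i B⟩,
        fun j => h2 ⟨j.1, Finset.mem_insert_of_mem j.2⟩, h3⟩
  have c2 : ent p (fun ω => (((fun j : B => f j.1 ω), T ω), ((fun j : D => f j.1 ω), T ω)))
      = EF p f T D := by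
    apply ent_congr
    intro ω₁ ω₂
    simp only [Prod.mk.injEq, funext_iff, EF]
    constructor
    · rintro ⟨⟨-, -⟩, h4, h5⟩
      exact ⟨h4, h5⟩
    · rintro ⟨h4, h5⟩
      exact ⟨⟨fun j => h4 ⟨j.1, hBD j.2⟩, h5⟩, h4, h5⟩
  have c3 : ent p (fun ω => ((f i ω, ((fun j : B => f j.1 ω), T ω)), ((fun j : D => f j.1 ω), T ω)))
      = EF p f T (insert i D) := by
    apply ent_congr
    intro ω₁ ω₂
    simp only [Prod.mk.injEq, funext_iff, EF]
    constructor
    · rintro ⟨⟨h1, -, -⟩, h4, h5⟩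
      refine ⟨fun j => ?_, h5⟩
      rcases Finset.mem_insert.mp j.2 with hj | hj
      · rw [show (j : Fin m) = i from hj]; exact h1
      · exact h4 ⟨j.1, hj⟩
    · rintro ⟨h4, h5⟩
      exact ⟨⟨h4 ⟨i, Finset.mem_insert_self i D⟩,
        fun j => h4 ⟨j.1, Finset.mem_insert_of_mem (hBD j.2)⟩, h5⟩,
        fun j => h4 ⟨j.1, Finset.mem_insert_of_mem j.2⟩, h5⟩
  rw [c1, c2, c3] at h
  have hYB : ent p (fun ω => ((fun j : B => f j.1 ω), T ω)) = EF p f T B := rfl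
  rw [hYB] at h
  linarith

lemma cond_subadd {m : ℕ} (E : Finset (Fin m) → ℝ)
    (hsub : ∀ (B D : Finset (Fin m)) (i : Fin m), B ⊆ D →
      E (insert i D) + E B ≤ E D + E (insert i B)) :
    ∀ (C B : Finset (Fin m)), E (B ∪ C) ≤ E B + ∑ i ∈ C, (E (insert i B) - E B) := by
  intro C
  induction C using Finset.induction_on with
  | empty => intro B; simp
  | insert i C hi IH =>
    intro B
    have h1 : B ∪ insert i C = insert i (B ∪ C) := by
      ext j; simp only [Finset.mem_insert, Finset.mem_union]; tauto
    have h2 := hsub B (B ∪ C) i (Finset.subset_union_left)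
    have h3 := IH B
    rw [h1, Finset.sum_insert hi]
    linarith
end S13

/-- Bounding mutual information for low-degree corruptions: if `x₁,…,x_m` are independent and
`Corrupt` changes each coordinate to one of at most `d` values determined by that coordinate,
then for `S' = Corrupt(x₁,…,x_m)` and `r < m`,
`E_{i,B}[I(S'_i ; S'_B)] ≤ (m/(m−r)) ln d` with `i` uniform in `[m]` and `B` a uniform
size-`r` subset of `[m]∖{i}`. -/
theorem statement13 {Ω X : Type*} [Fintype Ω] [Fintype X]
    (p : Ω → ℝ) (hp : IsPMF p) (m : ℕ) (x : Fin m → Ω → X)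
    (hind : dist' p (fun ω => fun i => x i ω) = fun v => ∏ i, dist' p (x i) (v i))
    (d : ℕ) (Corrupt : (Fin m → X) → (Fin m → X))
    (hCor : ∀ i : Fin m, ∃ F : X → Finset X, (∀ a, (F a).card ≤ d) ∧
      ∀ v : Fin m → X, Corrupt v i ∈ F (v i))
    (r : ℕ) (hr : r < m) :
    (∑ i : Fin m, ∑ B ∈ ({i}ᶜ : Finset (Fin m)).powersetCard r,
          MI p (fun ω => Corrupt (fun j => x j ω) i)
               (fun ω => fun (j : B) => Corrupt (fun j' => x j' ω) j.1))
        / ((m : ℝ) * ((m - 1).choose r : ℝ))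
      ≤ ((m : ℝ) / ((m : ℝ) - (r : ℝ))) * Real.log d := by
  classical
  have hm : 0 < m := lt_of_le_of_lt (Nat.zero_le r) hr
  have hp0 := hp.1
  -- X is nonempty
  have hX : Nonempty X := by
    by_contra hX
    rw [not_nonempty_iff] at hX
    have hΩ : IsEmpty Ω := ⟨fun ω => hX.elim (x ⟨0, hm⟩ ω)⟩
    have h2 := hp.2
    rw [Finset.univ_eq_empty, Finset.sum_empty] at h2
    norm_num at h2
  obtain ⟨x0⟩ := hX
  -- d ≥ 1
  have hd1 : 1 ≤ d := by
    obtain ⟨F, hFc, hFm⟩ := hCor ⟨0, hm⟩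
    have h1 := hFm (fun _ => x0)
    have h2 : 0 < (F x0).card := Finset.card_pos.mpr ⟨_, h1⟩
    exact le_trans h2 (hFc x0)
  -- notation
  set f : Fin m → Ω → X := fun i ω => Corrupt (fun j => x j ω) i with hf
  set Sf : Ω → Fin m → X := fun ω => Corrupt (fun j => x j ω) with hSf
  set E : Finset (Fin m) → ℝ := fun A => S13.EF p f (fun _ => ()) A with hE
  set G : Finset (Fin m) → ℝ := fun A => S13.EF p x Sf A with hG
  set Hfull : ℝ := S13.ent p Sf with hHfull
  have hsubE : ∀ (B D : Finset (Fin m)) (i : Fin m), B ⊆ D →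
      E (insert i D) + E B ≤ E D + E (insert i B) :=
    fun B D i h => S13.EF_submod hp f (fun _ => ()) i h
  have hsubG : ∀ (B D : Finset (Fin m)) (i : Fin m), B ⊆ D →
      G (insert i D) + G B ≤ G D + G (insert i B) :=
    fun B D i h => S13.EF_submod hp x Sf i h
  -- E ∅ = 0
  have hE0 : E ∅ = 0 := by
    rw [hE]
    simp only [S13.EF]
    exact S13.ent_const hp fun ω₁ ω₂ => by
      refine Prod.ext ?_ rfl
      funext j
      exact absurd j.2 (Finset.notMem_empty _)
  -- ent of single coordinate
  have eX : ∀ i : Fin m, S13.ent p (f i) = E ({i} : Finset (Fin m)) := by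
    intro i
    rw [hE]; simp only [S13.EF]
    apply S13.ent_congr
    intro ω₁ ω₂
    simp only [Prod.mk.injEq, funext_iff]
    constructor
    · intro h
      exact ⟨fun j => by rw [show (j : Fin m) = i from Finset.mem_singleton.mp j.2]; exact h, trivial⟩
    · rintro ⟨h2, -⟩
      exact h2 ⟨i, Finset.mem_singleton_self i⟩
  -- E univ = Hfull
  have hEuniv : E (Finset.univ : Finset (Fin m)) = Hfull := by
    rw [hE, hHfull]; simp only [S13.EF]
    apply S13.ent_congr
    intro ω₁ ω₂
    simp only [Prod.mk.injEq, funext_iff]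
    constructor
    · rintro ⟨h1, -⟩
      intro j
      exact h1 ⟨j, Finset.mem_univ j⟩
    · intro h
      exact ⟨fun j => h j.1, trivial⟩
  -- the key MI identity
  have MIeq : ∀ (i : Fin m) (B : Finset (Fin m)),
      MI p (fun ω => Corrupt (fun j => x j ω) i)
           (fun ω => fun (j : B) => Corrupt (fun j' => x j' ω) j.1)
        = E ({i} : Finset (Fin m)) + E B - E (insert i B) := by
    intro i B
    rw [S13.MI_eq hp]
    have e1 : S13.ent p (fun ω => Corrupt (fun j => x j ω) i) = E ({i} : Finset (Fin m)) := eX i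
    have e2 : S13.ent p (fun ω => fun (j : B) => Corrupt (fun j' => x j' ω) j.1) = E B := by
      rw [hE]; simp only [S13.EF]
      apply S13.ent_congr
      intro ω₁ ω₂
      simp only [Prod.mk.injEq, funext_iff]
      constructor
      · intro h; exact ⟨h, trivial⟩
      · rintro ⟨h, -⟩; exact h
    have e3 : S13.ent p (fun ω => ((fun ω' => Corrupt (fun j => x j ω') i) ω,
          (fun ω' => fun (j : B) => Corrupt (fun j' => x j' ω') j.1) ω))
        = E (insert i B) := by
      rw [hE]; simp only [S13.EF]
      apply S13.ent_congr
      intro ω₁ ω₂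
      simp only [Prod.mk.injEq, funext_iff]
      constructor
      · rintro ⟨h1, h2⟩
        refine ⟨fun j => ?_, trivial⟩
        rcases Finset.mem_insert.mp j.2 with hj | hj
        · rw [show (j : Fin m) = i from hj]; exact h1
        · exact h2 ⟨j.1, hj⟩
      · rintro ⟨h, -⟩
        exact ⟨h ⟨i, Finset.mem_insert_self i B⟩,
          fun j => h ⟨j.1, Finset.mem_insert_of_mem j.2⟩⟩
    rw [e1, e2, e3]
  -- per-B bound: sum over i ∉ B of MI is at most total correlation
  have hB : ∀ B : Finset (Fin m),
      ∑ i ∈ Bᶜ, (E ({i} : Finset (Fin m)) + E B - E (insert i B))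
        ≤ (∑ i, E ({i} : Finset (Fin m))) - E (Finset.univ : Finset (Fin m)) := by
    intro B
    have h1 := S13.cond_subadd E hsubE Bᶜ B
    rw [Finset.union_compl] at h1
    have h2 := S13.cond_subadd E hsubE B ∅
    rw [Finset.empty_union] at h2
    simp only [hE0] at h2
    have h2' : E B ≤ ∑ i ∈ B, E ({i} : Finset (Fin m)) := by
      calc E B ≤ 0 + ∑ i ∈ B, (E (insert i ∅) - 0) := h2
        _ = ∑ i ∈ B, E ({i} : Finset (Fin m)) := by
            rw [zero_add]
            refine Finset.sum_congr rfl fun i _ => ?_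
            rw [sub_zero]
            rfl
    have h3 : ∑ i ∈ Bᶜ, (E ({i} : Finset (Fin m)) + E B - E (insert i B))
        = ∑ i ∈ Bᶜ, E ({i} : Finset (Fin m)) - ∑ i ∈ Bᶜ, (E (insert i B) - E B) := by
      rw [← Finset.sum_sub_distrib]
      exact Finset.sum_congr rfl fun i _ => by ring
    have h4 : ∑ i ∈ Bᶜ, E ({i} : Finset (Fin m)) + ∑ i ∈ B, E ({i} : Finset (Fin m))
        = ∑ i, E ({i} : Finset (Fin m)) := Finset.sum_compl_add_sum B _
    linarith
  -- total correlation bound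
  have hTC : (∑ i, E ({i} : Finset (Fin m))) - E (Finset.univ : Finset (Fin m))
      ≤ (m : ℝ) * Real.log d := by
    -- G ∅ = Hfull
    have hG0 : G ∅ = Hfull := by
      rw [hG, hHfull]; simp only [S13.EF]
      apply S13.ent_congr
      intro ω₁ ω₂
      simp only [Prod.mk.injEq, funext_iff]
      constructor
      · rintro ⟨-, h2⟩; exact h2
      · intro h
        exact ⟨fun j => absurd j.2 (Finset.notMem_empty _), h⟩
    -- sum of individual x-entropies is at most G univ
    have hGuniv : (∑ i, S13.ent p (x i)) ≤ G (Finset.univ : Finset (Fin m)) := by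
      rw [← S13.ent_tuple hp x hind]
      have h1 : S13.ent p (fun ω => fun i => x i ω)
          = S13.ent p (fun ω => fun j : (Finset.univ : Finset (Fin m)) => x j.1 ω) := by
        apply S13.ent_congr
        intro ω₁ ω₂
        simp only [funext_iff]
        constructor
        · intro h j; exact h j.1
        · intro h i; exact h ⟨i, Finset.mem_univ i⟩
      rw [h1, hG]
      exact S13.ent_pair_ge_fst hp _ Sf
    -- G {i} bound via ssa
    have hGi : ∀ i : Fin m, G ({i} : Finset (Fin m)) + E ({i} : Finset (Fin m))
        ≤ S13.ent p (fun ω => (x i ω, f i ω)) + Hfull := by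
      intro i
      have h := S13.ssa hp (x i) (f i) Sf
      have c1 : S13.ent p (fun ω => ((x i ω, f i ω), Sf ω)) = G ({i} : Finset (Fin m)) := by
        rw [hG]; simp only [S13.EF]
        apply S13.ent_congr
        intro ω₁ ω₂
        simp only [Prod.mk.injEq, funext_iff]
        constructor
        · rintro ⟨⟨h1, -⟩, h3⟩
          exact ⟨fun j => by rw [show (j : Fin m) = i from Finset.mem_singleton.mp j.2]; exact h1,
            h3⟩
        · rintro ⟨h1, h3⟩
          exact ⟨⟨h1 ⟨i, Finset.mem_singleton_self i⟩, h3 i⟩, h3⟩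
      have c2 : S13.ent p (fun ω => (f i ω, Sf ω)) = Hfull := by
        rw [hHfull]
        apply S13.ent_congr
        intro ω₁ ω₂
        simp only [Prod.mk.injEq]
        constructor
        · rintro ⟨-, h2⟩; exact h2
        · intro h
          exact ⟨congrFun h i, h⟩
      rw [c1, c2, eX i] at h
      linarith
    -- per-coordinate conditional entropy bound
    have hcond : ∀ i : Fin m, S13.ent p (fun ω => (x i ω, f i ω))
        ≤ S13.ent p (x i) + Real.log d := by
      intro i
      obtain ⟨F, hFc, hFm⟩ := hCor i
      have hswap : S13.ent p (fun ω => (x i ω, f i ω))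
          = S13.ent p (fun ω => (f i ω, x i ω)) :=
        S13.ent_congr fun ω₁ ω₂ => by simp [Prod.ext_iff, and_comm]
      rw [hswap]
      exact S13.cond_card_bound hp hd1 (f i) (x i) F hFc fun ω => hFm (fun j => x j ω)
    -- chain for G
    have hchain := S13.cond_subadd G hsubG Finset.univ ∅
    rw [Finset.empty_union] at hchain
    simp only [hG0] at hchain
    have hstep : ∀ i ∈ Finset.univ (α := Fin m), G (insert i ∅) - Hfull
        ≤ (S13.ent p (x i) + Real.log d) - E ({i} : Finset (Fin m)) := by
      intro i _
      have h1 : G (insert i ∅) = G ({i} : Finset (Fin m)) := rfl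
      have := hGi i
      have := hcond i
      rw [h1]
      linarith
    have hsum := Finset.sum_le_sum hstep
    have hcard : ∑ _i ∈ Finset.univ (α := Fin m), Real.log d = (m : ℝ) * Real.log d := by
      rw [Finset.sum_const, Finset.card_univ, Fintype.card_fin, nsmul_eq_mul]
    have hGU := hGuniv
    have hchain' : G (Finset.univ : Finset (Fin m))
        ≤ Hfull + ∑ i, (G (insert i ∅) - Hfull) := hchain
    have hexp : ∑ i, ((S13.ent p (x i) + Real.log d) - E ({i} : Finset (Fin m)))
        = ∑ i, S13.ent p (x i) + (m : ℝ) * Real.log d - ∑ i, E ({i} : Finset (Fin m)) := by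
      rw [Finset.sum_sub_distrib, Finset.sum_add_distrib, hcard]
    have := le_trans hsum (le_of_eq hexp)
    rw [hEuniv]
    linarith
  -- reindex the double sum
  have hmem : ∀ (i : Fin m) (B : Finset (Fin m)),
      i ∈ Finset.univ (α := Fin m) ∧ B ∈ ({i}ᶜ : Finset (Fin m)).powersetCard r
        ↔ i ∈ Bᶜ ∧ B ∈ (Finset.univ : Finset (Fin m)).powersetCard r := by
    intro i B
    simp only [Finset.mem_univ, true_and, Finset.mem_powersetCard, Finset.mem_compl]
    constructor
    · rintro ⟨h1, h2⟩
      refine ⟨fun hi => by simpa using h1 hi, ⟨Finset.subset_univ B, h2⟩⟩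
    · rintro ⟨h1, -, h2⟩
      refine ⟨fun b hb => ?_, h2⟩
      simp only [Finset.mem_compl, Finset.mem_singleton]
      rintro rfl
      exact h1 hb
  have hswap := Finset.sum_comm' hmem
    (f := fun (i : Fin m) (B : Finset (Fin m)) =>
      MI p (fun ω => Corrupt (fun j => x j ω) i)
           (fun ω => fun (j : B) => Corrupt (fun j' => x j' ω) j.1))
  -- bound the double sum
  have hLbound : (∑ i : Fin m, ∑ B ∈ ({i}ᶜ : Finset (Fin m)).powersetCard r,
        MI p (fun ω => Corrupt (fun j => x j ω) i)
             (fun ω => fun (j : B) => Corrupt (fun j' => x j' ω) j.1))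
      ≤ (m.choose r : ℝ) * ((m : ℝ) * Real.log d) := by
    rw [hswap]
    have hper : ∀ B ∈ (Finset.univ : Finset (Fin m)).powersetCard r,
        (∑ i ∈ Bᶜ, MI p (fun ω => Corrupt (fun j => x j ω) i)
            (fun ω => fun (j : B) => Corrupt (fun j' => x j' ω) j.1))
          ≤ (m : ℝ) * Real.log d := by
      intro B _
      have h1 : (∑ i ∈ Bᶜ, MI p (fun ω => Corrupt (fun j => x j ω) i)
            (fun ω => fun (j : B) => Corrupt (fun j' => x j' ω) j.1))
          = ∑ i ∈ Bᶜ, (E ({i} : Finset (Fin m)) + E B - E (insert i B)) :=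
        Finset.sum_congr rfl fun i _ => MIeq i B
      rw [h1]
      exact le_trans (hB B) hTC
    calc (∑ B ∈ (Finset.univ : Finset (Fin m)).powersetCard r,
          ∑ i ∈ Bᶜ, MI p (fun ω => Corrupt (fun j => x j ω) i)
            (fun ω => fun (j : B) => Corrupt (fun j' => x j' ω) j.1))
        ≤ ∑ _B ∈ (Finset.univ : Finset (Fin m)).powersetCard r, (m : ℝ) * Real.log d :=
          Finset.sum_le_sum hper
      _ = (m.choose r : ℝ) * ((m : ℝ) * Real.log d) := by
          rw [Finset.sum_const, Finset.card_powersetCard, Finset.card_univ, Fintype.card_fin,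
            nsmul_eq_mul]
  -- final arithmetic
  have hchoose : m * (m - 1).choose r = m.choose r * (m - r) := by
    have h1 := Nat.add_one_mul_choose_eq (m - 1) r
    rw [Nat.sub_add_cancel hm] at h1
    have h2 := Nat.choose_succ_right_eq m r
    exact h1.trans h2
  have hmr : (0 : ℝ) < (m : ℝ) - r := by
    have : (r : ℝ) < (m : ℝ) := by exact_mod_cast hr
    linarith
  have hD : (0 : ℝ) < (m : ℝ) * ((m - 1).choose r : ℝ) := by
    have h1 : 0 < (m - 1).choose r := Nat.choose_pos (by omega)
    have h2 : (0 : ℝ) < ((m - 1).choose r : ℝ) := by exact_mod_cast h1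
    have h3 : (0 : ℝ) < (m : ℝ) := by exact_mod_cast hm
    positivity
  rw [div_le_iff₀ hD]
  have hidR : (m : ℝ) * ((m - 1).choose r : ℝ) = (m.choose r : ℝ) * ((m : ℝ) - r) := by
    calc (m : ℝ) * ((m - 1).choose r : ℝ) = ((m * (m - 1).choose r : ℕ) : ℝ) := by push_cast; ring
      _ = ((m.choose r * (m - r) : ℕ) : ℝ) := by rw [hchoose]
      _ = (m.choose r : ℝ) * ((m : ℝ) - r) := by
          rw [Nat.cast_mul, Nat.cast_sub hr.le]
  rw [hidR]
  have hfinal : ((m : ℝ) / ((m : ℝ) - r)) * Real.log d * ((m.choose r : ℝ) * ((m : ℝ) - r))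
      = (m.choose r : ℝ) * ((m : ℝ) * Real.log d) := by
    field_simp
  rw [hfinal]
  exact hLbound
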